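/- Let ρ ∈ (0,1) and A₂(ρ) = [[-ρ², ρ√(2(1-ρ²)), 1-ρ²],[ρ√(2(1-ρ²)), 2ρ²-1, ρ√(2(1-ρ²))],[1-ρ², ρ√(2(1-ρ²)), -ρ²]]. For any function φ : ℤ → ℂ not identically zero, Ψ(x) = (φ(x), (ρ/√(2(1-ρ²)))(φ(x)+φ(x-1)), φ(x-1)) satisfies U_{A₂(ρ)}Ψ = Ψ, giving the stationary measure μ(x) = ((2-ρ²)/(2(1-ρ²)))(|φ(x)|² + |φ(x-1)|²) + (ρ²/(1-ρ²))·Re(φ(x)·conj(φ(x-1))). -/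

import Mathlib

open Complex Matrix Finset

noncomputable def walk (A : Matrix (Fin 3) (Fin 3) ℂ) (Ψ : ℤ → Fin 3 → ℂ) : ℤ → Fin 3 → ℂ :=
  fun x => ![∑ j, A 0 j * Ψ (x + 1) j, ∑ j, A 1 j * Ψ x j, ∑ j, A 2 j * Ψ (x - 1) j]

noncomputable def A₂ (ρ : ℝ) : Matrix (Fin 3) (Fin 3) ℂ :=
  !![(-ρ ^ 2 : ℝ), (ρ * Real.sqrt (2 * (1 - ρ ^ 2)) : ℝ), ((1 - ρ ^ 2 : ℝ) : ℂ);
    (ρ * Real.sqrt (2 * (1 - ρ ^ 2)) : ℝ), ((2 * ρ ^ 2 - 1 : ℝ) : ℂ), (ρ * Real.sqrt (2 * (1 - ρ ^ 2)) : ℝ);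
    ((1 - ρ ^ 2 : ℝ) : ℂ), (ρ * Real.sqrt (2 * (1 - ρ ^ 2)) : ℝ), (-ρ ^ 2 : ℝ)]

theorem A₂_type2_stationary (ρ : ℝ) (hρ : ρ ∈ Set.Ioo (0 : ℝ) 1)
    (φ : ℤ → ℂ) (hφ : ∃ x, φ x ≠ 0)
    (Ψ : ℤ → Fin 3 → ℂ)
    (hΨ : Ψ = fun x => ![φ x,
      ((ρ / Real.sqrt (2 * (1 - ρ ^ 2)) : ℝ) : ℂ) * (φ x + φ (x - 1)), φ (x - 1)]) :
    walk (A₂ ρ) Ψ = Ψ ∧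
    ∀ x : ℤ, ∑ i, ‖Ψ x i‖ ^ 2 =
      (2 - ρ ^ 2) / (2 * (1 - ρ ^ 2)) * (‖φ x‖ ^ 2 + ‖φ (x - 1)‖ ^ 2)
      + ρ ^ 2 / (1 - ρ ^ 2) * (φ x * (starRingEnd ℂ) (φ (x - 1))).re := by
  obtain ⟨hρ0, hρ1⟩ := hρ
  have h1 : (0 : ℝ) < 1 - ρ ^ 2 := by nlinarith
  set s : ℝ := Real.sqrt (2 * (1 - ρ ^ 2)) with hs
  have hs2 : s ^ 2 = 2 * (1 - ρ ^ 2) := Real.sq_sqrt (by linarith)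
  have hspos : 0 < s := Real.sqrt_pos.mpr (by linarith)
  have hsne : (s : ℂ) ≠ 0 := by exact_mod_cast hspos.ne'
  have hs2c : (s : ℂ) ^ 2 = 2 * (1 - (ρ : ℂ) ^ 2) := by
    exact_mod_cast congrArg (Complex.ofReal ·) hs2
  have hsplit : ((Real.sqrt 2 : ℝ) : ℂ) * ((Real.sqrt (1 - ρ ^ 2) : ℝ) : ℂ) = (s : ℂ) := by
    rw [← Complex.ofReal_mul, hs, ← Real.sqrt_mul (by norm_num : (0:ℝ) ≤ 2)]
  subst hΨ
  constructor
  · funext x i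
    fin_cases i <;>
      simp only [walk, A₂, Fin.sum_univ_three, Matrix.cons_val_zero, Matrix.cons_val_one,
        Matrix.head_cons, Matrix.cons_val_two, Matrix.tail_cons, Matrix.of_apply,
        Complex.ofReal_mul, Complex.ofReal_div, Complex.ofReal_neg, Complex.ofReal_pow,
        Complex.ofReal_sub, Complex.ofReal_one, Complex.ofReal_ofNat]
    all_goals simp only [Fin.zero_eta, Fin.mk_one, Fin.reduceFinMk, Matrix.cons_val, ← hs]
    · have e : x + 1 - 1 = x := by ring
      rw [e]
      field_simp
      ring
    · field_simp
      linear_combination ((ρ : ℂ) * (φ x + φ (x - 1))) * hs2c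
    · have e : x - 1 - 1 = x - 2 := by ring
      rw [e]
      field_simp
      ring
  · intro x
    simp only [Fin.sum_univ_three, Matrix.cons_val_zero, Matrix.cons_val_one, Matrix.head_cons,
      Matrix.cons_val_two, Matrix.tail_cons]
    rw [norm_mul, mul_pow]
    have h2 : ‖((ρ / s : ℝ) : ℂ)‖ ^ 2 = ρ ^ 2 / (2 * (1 - ρ ^ 2)) := by
      rw [Complex.norm_real, Real.norm_eq_abs, _root_.sq_abs, div_pow, hs2]
    have h3 : ‖φ x + φ (x - 1)‖ ^ 2 = ‖φ x‖ ^ 2 + ‖φ (x - 1)‖ ^ 2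
        + 2 * (φ x * (starRingEnd ℂ) (φ (x - 1))).re := by
      have h := Complex.normSq_add (φ x) (φ (x - 1))
      simp only [Complex.normSq_eq_norm_sq] at h
      exact h
    rw [h2, h3]
    field_simp
    ring
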